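/- Assume Δt ≤ 1/2 and let the node features be generated by the GraphCON-GCN recursion for n = 1,…,N. Let J(Z^N) = (1/2v) Σ_{i=1}^v (X^N_i − X̄_i)² be the loss as a function of the final concatenated state Z^N, for a fixed target X̄ ∈ ℝ^v. Then every partial derivative of J with respect to an entry of Z^N is bounded in absolute value by (1/v)(max_{1≤i≤v}(|X⁰_i| + |Y⁰_i|) + max_{1≤i≤v}|X̄_i| + β√(NΔt)). -/

import Mathlib

section Aux15

lemma aux15_scalar_step (D x y u : ℝ) (h1 : 0 < D) (h2 : D ≤ 1/2) :
    (x + D*((1-D)*y + D*u - D*x))^2 + ((1-D)*y + D*u - D*x)^2 ≤ x^2 + y^2 + D*u^2 := by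
  have key : D*((1-D)*y + D*u - D*x)^2 ≤ y^2 + D*x^2 + (1-D)*(u-y)^2 := by
    nlinarith [sq_nonneg ((1-D)*y - D^2*((u-y)-x)), sq_nonneg (x + (u-y)),
      mul_nonneg (mul_nonneg (mul_nonneg h1.le (by linarith : (0:ℝ) ≤ 1-2*D)) (by linarith : (0:ℝ) ≤ 1+D)) (sq_nonneg x),
      mul_nonneg (mul_nonneg (by linarith : (0:ℝ) ≤ 1-2*D) (by nlinarith [sq_nonneg D] : (0:ℝ) ≤ 1+D^2)) (sq_nonneg (u-y)),
      mul_nonneg (mul_nonneg (mul_nonneg h1.le h1.le) h1.le) (sq_nonneg (x + (u-y))),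
      h1.le, sq_nonneg (u-y)]
  nlinarith [mul_le_mul_of_nonneg_left key h1.le, sq_nonneg (u-y)]

lemma aux15_sqrt_add_le (a b : ℝ) (ha : 0 ≤ a) (hb : 0 ≤ b) :
    Real.sqrt (a + b) ≤ Real.sqrt a + Real.sqrt b := by
  rw [show a + b = Real.sqrt a ^ 2 + Real.sqrt b ^ 2 by
    rw [Real.sq_sqrt ha, Real.sq_sqrt hb]]
  have h := Real.sqrt_nonneg a
  have h2 := Real.sqrt_nonneg b
  rw [show Real.sqrt a ^2 + Real.sqrt b ^2 = (Real.sqrt a + Real.sqrt b)^2 - 2*(Real.sqrt a * Real.sqrt b) by ring]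
  calc Real.sqrt ((Real.sqrt a + Real.sqrt b)^2 - 2*(Real.sqrt a * Real.sqrt b))
      ≤ Real.sqrt ((Real.sqrt a + Real.sqrt b)^2) := by
        apply Real.sqrt_le_sqrt; nlinarith [mul_nonneg h h2]
    _ = Real.sqrt a + Real.sqrt b := by
        rw [Real.sqrt_sq (by linarith)]

noncomputable def aux15P (v : ℕ) : Fin v → ((Fin v → ℝ) × (Fin v → ℝ)) →L[ℝ] ℝ :=
    fun i => (ContinuousLinearMap.proj i).comp (ContinuousLinearMap.fst ℝ (Fin v → ℝ) (Fin v → ℝ))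

lemma aux15_deriv {v : ℕ} (c : ℝ) (Xbar : Fin v → ℝ) (ZN : (Fin v → ℝ) × (Fin v → ℝ)) :
    HasFDerivAt (fun Z : (Fin v → ℝ) × (Fin v → ℝ) => c * ∑ i : Fin v, (Z.1 i - Xbar i)^2)
      (c • ∑ i : Fin v, ((ZN.1 i - Xbar i) • aux15P v i + (ZN.1 i - Xbar i) • aux15P v i)) ZN := by
  apply HasFDerivAt.const_mul
  apply HasFDerivAt.fun_sum
  intro i _
  have h1 : HasFDerivAt (fun Z : (Fin v → ℝ) × (Fin v → ℝ) => Z.1 i - Xbar i) (aux15P v i) ZN :=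
    ((aux15P v i).hasFDerivAt (x := ZN)).sub_const (Xbar i)
  have := h1.fun_mul h1
  simpa [pow_two, smul_smul] using this

lemma aux15_eval1 {v : ℕ} (c : ℝ) (Xbar : Fin v → ℝ) (ZN : (Fin v → ℝ) × (Fin v → ℝ)) (i : Fin v) :
    (c • ∑ j : Fin v, ((ZN.1 j - Xbar j) • aux15P v j + (ZN.1 j - Xbar j) • aux15P v j)) (Pi.single i 1, 0)
      = c * (2 * (ZN.1 i - Xbar i)) := by
  simp only [ContinuousLinearMap.smul_apply, ContinuousLinearMap.sum_apply,
    ContinuousLinearMap.add_apply, aux15P, ContinuousLinearMap.comp_apply,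
    ContinuousLinearMap.coe_fst', ContinuousLinearMap.proj_apply, smul_eq_mul,
    Pi.single_apply]
  rw [Finset.sum_eq_single i]
  · simp only [eq_self_iff_true, if_true, if_pos rfl, mul_one, one_mul]; ring
  · intro b _ hb; simp [hb]
  · intro h; exact absurd (Finset.mem_univ i) h

lemma aux15_eval2 {v : ℕ} (c : ℝ) (Xbar : Fin v → ℝ) (ZN : (Fin v → ℝ) × (Fin v → ℝ)) (i : Fin v) :
    (c • ∑ j : Fin v, ((ZN.1 j - Xbar j) • aux15P v j + (ZN.1 j - Xbar j) • aux15P v j)) ((0 : Fin v → ℝ), Pi.single i 1)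
      = 0 := by
  simp [ContinuousLinearMap.sum_apply, aux15P]

end Aux15


/-- One step of the GraphCON-GCN recursion, mapping the state
`Z = (X, Y) ∈ ℝ^v × ℝ^v` to the new state, for weight vector `wn`:
`C_i = (wn_i/d_i) X_i + ∑_{j∈N_i} wn_j X_j / √(d_i d_j)`,
`Y'_i = (1 − Δt) Y_i + Δt σ(C_i) − Δt X_i`, `X'_i = X_i + Δt Y'_i`. -/
noncomputable def gcnStep {v : ℕ} (G : SimpleGraph (Fin v)) [DecidableRel G.Adj]
    (d : Fin v → ℝ) (σ : ℝ → ℝ) (Δt : ℝ) (wn : Fin v → ℝ)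
    (p : (Fin v → ℝ) × (Fin v → ℝ)) : (Fin v → ℝ) × (Fin v → ℝ) :=
  let C : Fin v → ℝ := fun i =>
    wn i / d i * p.1 i + ∑ j ∈ G.neighborFinset i, wn j * p.1 j / Real.sqrt (d i * d j)
  let Ynew : Fin v → ℝ := fun i => (1 - Δt) * p.2 i + Δt * σ (C i) - Δt * p.1 i
  (fun i => p.1 i + Δt * Ynew i, Ynew)

/-- The final state `Z^N` of the GraphCON-GCN recursion run for `N` layers with weight
vectors `W 0, …, W (N−1)` from the initial state `Z0 = (X⁰, Y⁰)`. -/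
noncomputable def gcnForward {v N : ℕ} (G : SimpleGraph (Fin v)) [DecidableRel G.Adj]
    (d : Fin v → ℝ) (σ : ℝ → ℝ) (Δt : ℝ) (W : Fin N → Fin v → ℝ)
    (Z0 : (Fin v → ℝ) × (Fin v → ℝ)) : (Fin v → ℝ) × (Fin v → ℝ) :=
  (List.finRange N).foldl (fun p n => gcnStep G d σ Δt (W n) p) Z0


lemma aux15_step_energy {v : ℕ} (G : SimpleGraph (Fin v)) [DecidableRel G.Adj]
    (d : Fin v → ℝ) (σ : ℝ → ℝ) (Δt : ℝ) (wn : Fin v → ℝ) (β : ℝ)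
    (hΔt : 0 < Δt) (hΔt2 : Δt ≤ 1/2) (hβ : ∀ x : ℝ, |σ x| ≤ β)
    (p : (Fin v → ℝ) × (Fin v → ℝ)) (i : Fin v) :
    ((gcnStep G d σ Δt wn p).1 i)^2 + ((gcnStep G d σ Δt wn p).2 i)^2
      ≤ (p.1 i)^2 + (p.2 i)^2 + Δt * β^2 := by
  set u := σ (wn i / d i * p.1 i + ∑ j ∈ G.neighborFinset i, wn j * p.1 j / Real.sqrt (d i * d j)) with hu
  have hub : u^2 ≤ β^2 := by
    have := hβ (wn i / d i * p.1 i + ∑ j ∈ G.neighborFinset i, wn j * p.1 j / Real.sqrt (d i * d j))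
    nlinarith [abs_nonneg u, sq_abs u, this]
  have h := aux15_scalar_step Δt (p.1 i) (p.2 i) u hΔt hΔt2
  have h1 : (gcnStep G d σ Δt wn p).1 i = p.1 i + Δt * ((1-Δt)*p.2 i + Δt*u - Δt*p.1 i) := by
    simp [gcnStep, hu]
  have h2 : (gcnStep G d σ Δt wn p).2 i = (1-Δt)*p.2 i + Δt*u - Δt*p.1 i := by
    simp [gcnStep, hu]
  rw [h1, h2]
  nlinarith [mul_le_mul_of_nonneg_left hub hΔt.le]

lemma aux15_foldl_energy {v N : ℕ} (G : SimpleGraph (Fin v)) [DecidableRel G.Adj]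
    (d : Fin v → ℝ) (σ : ℝ → ℝ) (Δt : ℝ) (W : Fin N → Fin v → ℝ) (β : ℝ)
    (hΔt : 0 < Δt) (hΔt2 : Δt ≤ 1/2) (hβ : ∀ x : ℝ, |σ x| ≤ β) :
    ∀ (l : List (Fin N)) (p : (Fin v → ℝ) × (Fin v → ℝ)) (i : Fin v),
      ((l.foldl (fun p n => gcnStep G d σ Δt (W n) p) p).1 i)^2
        + ((l.foldl (fun p n => gcnStep G d σ Δt (W n) p) p).2 i)^2
      ≤ (p.1 i)^2 + (p.2 i)^2 + l.length * (Δt * β^2) := by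
  intro l
  induction l with
  | nil => intro p i; simp
  | cons a l ih =>
    intro p i
    have h1 := ih (gcnStep G d σ Δt (W a) p) i
    have h2 := aux15_step_energy G d σ Δt (W a) β hΔt hΔt2 hβ p i
    simp only [List.foldl_cons, List.length_cons] at *
    push_cast
    linarith

/-- **Bound on the partial derivatives of the loss with respect to the final state.** Let
`J(Z^N) = (1/2v) ∑_i (X^N_i − X̄_i)²` be the loss as a function of the final concatenated
state `Z^N` generated by the GraphCON-GCN recursion with `Δt ≤ 1/2`. Then `J` is
differentiable at `Z^N` and every partial derivative of `J` with respect to an entry of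
`Z^N` is bounded in absolute value by
`(1/v)(max_i(|X⁰_i| + |Y⁰_i|) + max_i |X̄_i| + β√(NΔt))`. -/
theorem stmt_15 {v N : ℕ} (hv : 0 < v) (G : SimpleGraph (Fin v)) [DecidableRel G.Adj]
    (d : Fin v → ℝ) (hd : ∀ i : Fin v, 1 ≤ d i)
    (Δt : ℝ) (hΔt : 0 < Δt) (hΔt2 : Δt ≤ 1 / 2)
    (σ : ℝ → ℝ) (hσdiff : Differentiable ℝ σ)
    (β β' : ℝ) (hβ : ∀ x : ℝ, |σ x| ≤ β) (hβ' : ∀ x : ℝ, |deriv σ x| ≤ β')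
    (W : Fin N → Fin v → ℝ) (X0 Y0 Xbar : Fin v → ℝ) :
    let ZN : (Fin v → ℝ) × (Fin v → ℝ) := gcnForward G d σ Δt W (X0, Y0)
    let Jf : (Fin v → ℝ) × (Fin v → ℝ) → ℝ :=
      fun Z => (1 / (2 * (v : ℝ))) * ∑ i : Fin v, (Z.1 i - Xbar i) ^ 2
    let B : ℝ := (1 / (v : ℝ)) * ((⨆ i : Fin v, (|X0 i| + |Y0 i|))
      + (⨆ i : Fin v, |Xbar i|) + β * Real.sqrt ((N : ℝ) * Δt))
    DifferentiableAt ℝ Jf ZN ∧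
      ∀ i : Fin v,
        |fderiv ℝ Jf ZN (Pi.single i 1, 0)| ≤ B ∧
        |fderiv ℝ Jf ZN (0, Pi.single i 1)| ≤ B := by
  intro ZN Jf B
  haveI : Nonempty (Fin v) := ⟨⟨0, hv⟩⟩
  have hβ0 : 0 ≤ β := le_trans (abs_nonneg _) (hβ 0)
  have hv' : (0:ℝ) < v := by exact_mod_cast hv
  have hEN : ∀ i : Fin v, (ZN.1 i)^2 + (ZN.2 i)^2 ≤ (X0 i)^2 + (Y0 i)^2 + N * (Δt * β^2) := by
    intro i
    have hE := aux15_foldl_energy G d σ Δt W β hΔt hΔt2 hβ (List.finRange N) (X0, Y0) i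
    simpa [ZN, gcnForward] using hE
  clear_value ZN
  set c : ℝ := 1 / (2 * (v : ℝ)) with hc
  have hderiv : HasFDerivAt Jf
      (c • ∑ i : Fin v, ((ZN.1 i - Xbar i) • aux15P v i + (ZN.1 i - Xbar i) • aux15P v i)) ZN :=
    aux15_deriv c Xbar ZN
  have hdiff : DifferentiableAt ℝ Jf ZN := hderiv.differentiableAt
  refine ⟨hdiff, fun i => ?_⟩
  have hfd := hderiv.fderiv
  have hXN : |ZN.1 i| ≤ (|X0 i| + |Y0 i|) + β * Real.sqrt ((N:ℝ) * Δt) := by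
    have h1 : |ZN.1 i| = Real.sqrt ((ZN.1 i)^2) := (Real.sqrt_sq_eq_abs _).symm
    rw [h1]
    calc Real.sqrt ((ZN.1 i)^2)
        ≤ Real.sqrt ((|X0 i| + |Y0 i|)^2 + β^2 * ((N:ℝ) * Δt)) := by
          apply Real.sqrt_le_sqrt
          have h2 : (X0 i)^2 + (Y0 i)^2 ≤ (|X0 i| + |Y0 i|)^2 := by
            nlinarith [abs_nonneg (X0 i), abs_nonneg (Y0 i), sq_abs (X0 i), sq_abs (Y0 i),
              mul_nonneg (abs_nonneg (X0 i)) (abs_nonneg (Y0 i))]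
          nlinarith [sq_nonneg (ZN.2 i), hEN i]
      _ ≤ Real.sqrt ((|X0 i| + |Y0 i|)^2) + Real.sqrt (β^2 * ((N:ℝ) * Δt)) := by
          apply aux15_sqrt_add_le _ _ (sq_nonneg _)
          positivity
      _ = (|X0 i| + |Y0 i|) + β * Real.sqrt ((N:ℝ) * Δt) := by
          rw [Real.sqrt_sq (by positivity), Real.sqrt_mul (sq_nonneg β), Real.sqrt_sq hβ0]
  have hbdd1 : BddAbove (Set.range fun j : Fin v => |X0 j| + |Y0 j|) :=
    Set.Finite.bddAbove (Set.finite_range _)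
  have hbdd2 : BddAbove (Set.range fun j : Fin v => |Xbar j|) :=
    Set.Finite.bddAbove (Set.finite_range _)
  have hs1 : |X0 i| + |Y0 i| ≤ ⨆ j : Fin v, (|X0 j| + |Y0 j|) := le_ciSup hbdd1 i
  have hs2 : |Xbar i| ≤ ⨆ j : Fin v, |Xbar j| := le_ciSup hbdd2 i
  have hmain : (1/(v:ℝ)) * |ZN.1 i - Xbar i| ≤ B := by
    have habs : |ZN.1 i - Xbar i| ≤ (⨆ j : Fin v, (|X0 j| + |Y0 j|))
        + (⨆ j : Fin v, |Xbar j|) + β * Real.sqrt ((N:ℝ) * Δt) := by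
      calc |ZN.1 i - Xbar i| ≤ |ZN.1 i| + |Xbar i| := abs_sub _ _
        _ ≤ _ := by linarith
    have h0 : (0:ℝ) ≤ 1/(v:ℝ) := by positivity
    calc (1/(v:ℝ)) * |ZN.1 i - Xbar i| ≤ (1/(v:ℝ)) * ((⨆ j : Fin v, (|X0 j| + |Y0 j|))
        + (⨆ j : Fin v, |Xbar j|) + β * Real.sqrt ((N:ℝ) * Δt)) :=
          mul_le_mul_of_nonneg_left habs h0
      _ = B := rfl
  have hB0 : 0 ≤ B := le_trans (by positivity) hmain
  constructor
  · rw [hfd, aux15_eval1 c Xbar ZN i]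
    have habs2 : |c * (2 * (ZN.1 i - Xbar i))| = (1/(v:ℝ)) * |ZN.1 i - Xbar i| := by
      rw [abs_mul, abs_mul, abs_of_nonneg (by positivity : (0:ℝ) ≤ c),
        abs_of_nonneg (by norm_num : (0:ℝ) ≤ (2:ℝ)), hc]
      field_simp
    rw [habs2]; exact hmain
  · rw [hfd, aux15_eval2 c Xbar ZN i]
    simpa using hB0
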